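/- Consider a hidden Markov model with initial density p(x_0), transition densities p(x_{t+1}|x_t), and measurement densities p(y_t|x_t). Run the data-driven particle filter with L cyclic-permutation matching (1 ≤ L ≤ N): draw x_0^{[j]} i.i.d. from p(x_0) with π_0^{[j]} = 1/N; at each step draw x_{t+1}^{[j]} i.i.d. from a positive proposal density g_{t+1}(·), set w_{t+1}^{[j]} = (1/L) ∑_{l=1}^L π_t^{[k_{l,j}]} p(y_{t+1}|x_{t+1}^{[j]}) p(x_{t+1}^{[j]}|x_t^{[k_{l,j}]}) / g_{t+1}(x_{t+1}^{[j]}), π_{t+1}^{[j]} ∝ w_{t+1}^{[j]}, and define p̂(y_{1:T}) = ∏_{t=1}^T ∑_{j=1}^N w_t^{[j]}. Then E[p̂(y_{1:T})] = p(y_{1:T}) = ∫⋯∫ p(x_0) ∏_{t=1}^T p(y_t|x_t) p(x_t|x_{t−1}) dx_{0:T}. (Theorem 1: unbiasedness of the DPF likelihood estimator.) -/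

import Mathlib

open MeasureTheory Finset
open Fin.NatCast

section DPF

variable (N L : ℕ) [NeZero N]
variable (pobs : ℕ → ℝ → ℝ) (ptrans : ℕ → ℝ → ℝ → ℝ) (g : ℕ → ℝ → ℝ)

/-- Unnormalized DPF weight at time `t ≥ 1` for particle `j`, given the
particle array `u` and previous normalized weights `πprev`, with `L`
cyclic-permutation matches. -/
noncomputable def dpfStepW (u : ℕ → Fin N → ℝ) (t : ℕ) (πprev : Fin N → ℝ)
    (j : Fin N) : ℝ :=
  (L : ℝ)⁻¹ * ∑ l ∈ Finset.range L,
    πprev (j + (l : Fin N)) * pobs t (u t j) *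
      ptrans t (u (t - 1) (j + (l : Fin N))) (u t j) / g t (u t j)

/-- Normalized DPF weights `π_t^{[j]}`, defined recursively: `π_0 = 1/N` and
`π_{t+1} ∝ w_{t+1}`. -/
noncomputable def dpfPi (u : ℕ → Fin N → ℝ) : ℕ → Fin N → ℝ
  | 0 => fun _ => (N : ℝ)⁻¹
  | (t + 1) => fun j =>
      dpfStepW N L pobs ptrans g u (t + 1) (dpfPi u t) j /
        ∑ k : Fin N, dpfStepW N L pobs ptrans g u (t + 1) (dpfPi u t) k

/-- Unnormalized DPF weight `w_t^{[j]}` (for `t ≥ 1`). -/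
noncomputable def dpfW (u : ℕ → Fin N → ℝ) (t : ℕ) (j : Fin N) : ℝ :=
  dpfStepW N L pobs ptrans g u t (dpfPi N L pobs ptrans g u (t - 1)) j

/-- The DPF likelihood estimator `p̂(y_{1:T}) = ∏_{t=1}^T ∑_j w_t^{[j]}`. -/
noncomputable def dpfLikeEst (T : ℕ) (u : ℕ → Fin N → ℝ) : ℝ :=
  ∏ t ∈ Finset.Icc 1 T, ∑ j : Fin N, dpfW N L pobs ptrans g u t j

end DPF

section Aux

variable (N L : ℕ) [NeZero N]
variable (pobs : ℕ → ℝ → ℝ) (ptrans : ℕ → ℝ → ℝ → ℝ) (g : ℕ → ℝ → ℝ)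

/-- Unnormalized recursion: `S 0 = 1/N`, `S (t+1) = stepW (t+1) (S t)`. -/
noncomputable def dpfS (u : ℕ → Fin N → ℝ) : ℕ → Fin N → ℝ
  | 0 => fun _ => (N : ℝ)⁻¹
  | (t + 1) => fun j => dpfStepW N L pobs ptrans g u (t + 1) (dpfS u t) j

@[simp] lemma dpfS_zero (u : ℕ → Fin N → ℝ) (j : Fin N) :
    dpfS N L pobs ptrans g u 0 j = (N : ℝ)⁻¹ := rfl

lemma dpfS_succ (u : ℕ → Fin N → ℝ) (t : ℕ) (j : Fin N) :
    dpfS N L pobs ptrans g u (t + 1) j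
      = dpfStepW N L pobs ptrans g u (t + 1) (dpfS N L pobs ptrans g u t) j := rfl

variable {N L pobs ptrans g}

lemma dpfStepW_nonneg (hpobs0 : ∀ t x, 0 ≤ pobs t x)
    (hptrans0 : ∀ t x x', 0 ≤ ptrans t x x') (hg0 : ∀ t x, 0 ≤ g t x)
    {u : ℕ → Fin N → ℝ} {t : ℕ} {π : Fin N → ℝ} (hπ : ∀ j, 0 ≤ π j) (j : Fin N) :
    0 ≤ dpfStepW N L pobs ptrans g u t π j := by
  refine mul_nonneg (by positivity) (Finset.sum_nonneg fun l _ => ?_)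
  exact div_nonneg (mul_nonneg (mul_nonneg (hπ _) (hpobs0 _ _)) (hptrans0 _ _ _)) (hg0 _ _)

lemma dpfPi_nonneg (hpobs0 : ∀ t x, 0 ≤ pobs t x)
    (hptrans0 : ∀ t x x', 0 ≤ ptrans t x x') (hg0 : ∀ t x, 0 ≤ g t x)
    (u : ℕ → Fin N → ℝ) : ∀ t j, 0 ≤ dpfPi N L pobs ptrans g u t j := by
  intro t
  induction t with
  | zero => intro j; simp only [dpfPi]; positivity
  | succ t ih =>
    intro j
    have h1 := dpfStepW_nonneg (L := L) (g := g) hpobs0 hptrans0 hg0 (u := u) (t := t + 1) ih j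
    have h2 : 0 ≤ ∑ k : Fin N, dpfStepW N L pobs ptrans g u (t + 1) (dpfPi N L pobs ptrans g u t) k :=
      Finset.sum_nonneg fun k _ => dpfStepW_nonneg (L := L) (g := g) hpobs0 hptrans0 hg0 ih k
    exact div_nonneg h1 h2

lemma dpfS_nonneg (hpobs0 : ∀ t x, 0 ≤ pobs t x)
    (hptrans0 : ∀ t x x', 0 ≤ ptrans t x x') (hg0 : ∀ t x, 0 ≤ g t x)
    (u : ℕ → Fin N → ℝ) : ∀ t j, 0 ≤ dpfS N L pobs ptrans g u t j := by
  intro t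
  induction t with
  | zero => intro j; rw [dpfS_zero]; positivity
  | succ t ih => intro j; exact dpfStepW_nonneg hpobs0 hptrans0 hg0 ih j

lemma dpfStepW_smul (u : ℕ → Fin N → ℝ) (t : ℕ) (c : ℝ) (π : Fin N → ℝ) (j : Fin N) :
    dpfStepW N L pobs ptrans g u t (fun k => c * π k) j
      = c * dpfStepW N L pobs ptrans g u t π j := by
  unfold dpfStepW
  simp only [Finset.mul_sum]
  refine Finset.sum_congr rfl fun l _ => ?_
  ring

/-- The key telescoping identity. -/
lemma dpfS_eq_prod_mul_pi (hpobs0 : ∀ t x, 0 ≤ pobs t x)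
    (hptrans0 : ∀ t x x', 0 ≤ ptrans t x x') (hg0 : ∀ t x, 0 ≤ g t x)
    (u : ℕ → Fin N → ℝ) : ∀ t j,
    dpfS N L pobs ptrans g u t j
      = (∏ s ∈ Finset.Icc 1 t, ∑ k : Fin N, dpfW N L pobs ptrans g u s k)
          * dpfPi N L pobs ptrans g u t j := by
  intro t
  induction t with
  | zero => intro j; simp [dpfPi]
  | succ t ih =>
    intro j
    have hc : dpfS N L pobs ptrans g u (t + 1) j
        = (∏ s ∈ Finset.Icc 1 t, ∑ k : Fin N, dpfW N L pobs ptrans g u s k)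
            * dpfStepW N L pobs ptrans g u (t + 1) (dpfPi N L pobs ptrans g u t) j := by
      rw [dpfS_succ]
      have : dpfS N L pobs ptrans g u t
          = fun k => (∏ s ∈ Finset.Icc 1 t, ∑ k : Fin N, dpfW N L pobs ptrans g u s k)
              * dpfPi N L pobs ptrans g u t k := funext fun k => ih k
      rw [this, dpfStepW_smul]
    rw [hc, Finset.prod_Icc_succ_top (Nat.le_add_left 1 t)]
    have hW : ∀ k, dpfW N L pobs ptrans g u (t + 1) k
        = dpfStepW N L pobs ptrans g u (t + 1) (dpfPi N L pobs ptrans g u t) k := by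
      intro k; rw [dpfW]; norm_num
    simp only [hW]
    set w := dpfStepW N L pobs ptrans g u (t + 1) (dpfPi N L pobs ptrans g u t) with hw
    have hπ : dpfPi N L pobs ptrans g u (t + 1) j = w j / ∑ k : Fin N, w k := rfl
    rw [hπ]
    by_cases h : ∑ k : Fin N, w k = 0
    · have hwj : w j = 0 := by
        have h0 : ∀ k ∈ Finset.univ, 0 ≤ w k := fun k _ =>
          dpfStepW_nonneg hpobs0 hptrans0 hg0 (dpfPi_nonneg hpobs0 hptrans0 hg0 u t) k
        have := (Finset.sum_eq_zero_iff_of_nonneg h0).mp h j (Finset.mem_univ j)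
        exact this
      rw [h, hwj]
      simp
    · field_simp

lemma dpfLikeEst_eq_sum_dpfS (hpobs0 : ∀ t x, 0 ≤ pobs t x)
    (hptrans0 : ∀ t x x', 0 ≤ ptrans t x x') (hg0 : ∀ t x, 0 ≤ g t x)
    (u : ℕ → Fin N → ℝ) (T : ℕ) :
    dpfLikeEst N L pobs ptrans g T u = ∑ j : Fin N, dpfS N L pobs ptrans g u T j := by
  have hS := dpfS_eq_prod_mul_pi (L := L) (g := g) hpobs0 hptrans0 hg0 (u := u)
  cases T with
  | zero =>
    simp only [dpfLikeEst, show Finset.Icc 1 0 = (∅ : Finset ℕ) by simp, Finset.prod_empty]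
    rw [Finset.sum_congr rfl (fun j _ => dpfS_zero N L pobs ptrans g u j)]
    rw [Finset.sum_const, Finset.card_univ, Fintype.card_fin, nsmul_eq_mul,
      mul_inv_cancel₀ (Nat.cast_ne_zero.mpr (NeZero.ne N))]
  | succ t =>
    have hprod : dpfLikeEst N L pobs ptrans g (t + 1) u
        = (∏ s ∈ Finset.Icc 1 t, ∑ k : Fin N, dpfW N L pobs ptrans g u s k)
            * ∑ k : Fin N, dpfW N L pobs ptrans g u (t + 1) k := by
      rw [dpfLikeEst, Finset.prod_Icc_succ_top (Nat.le_add_left 1 t)]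
    by_cases h : ∑ k : Fin N, dpfW N L pobs ptrans g u (t + 1) k = 0
    · rw [hprod, h, mul_zero]
      symm
      refine Finset.sum_eq_zero fun j _ => ?_
      rw [hS (t + 1) j, Finset.prod_Icc_succ_top (Nat.le_add_left 1 t), h, mul_zero, zero_mul]
    · have h' : ∑ k : Fin N, dpfStepW N L pobs ptrans g u (t + 1)
          (dpfPi N L pobs ptrans g u t) k ≠ 0 := by
        simpa only [dpfW, Nat.add_sub_cancel] using h
      have hpi : ∑ j : Fin N, dpfPi N L pobs ptrans g u (t + 1) j = 1 := by
        have hd : ∀ j : Fin N, dpfPi N L pobs ptrans g u (t + 1) j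
            = dpfStepW N L pobs ptrans g u (t + 1) (dpfPi N L pobs ptrans g u t) j
              / ∑ k : Fin N, dpfStepW N L pobs ptrans g u (t + 1)
                  (dpfPi N L pobs ptrans g u t) k := fun j => rfl
        rw [Finset.sum_congr rfl (fun j _ => hd j), ← Finset.sum_div, div_self h']
      have hsum : ∑ j : Fin N, dpfS N L pobs ptrans g u (t + 1) j
          = (∏ s ∈ Finset.Icc 1 (t + 1), ∑ k : Fin N, dpfW N L pobs ptrans g u s k)
              * ∑ j : Fin N, dpfPi N L pobs ptrans g u (t + 1) j := by
        rw [Finset.mul_sum]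
        exact Finset.sum_congr rfl fun j _ => hS (t + 1) j
      rw [hsum, hpi, mul_one, hprod, Finset.prod_Icc_succ_top (Nat.le_add_left 1 t)]

end Aux


theorem my_lmarginal_prod {ι : Type*} [Fintype ι] [DecidableEq ι] {α : ι → Type*}
    [∀ i, MeasurableSpace (α i)] (μ : ∀ i, Measure (α i)) [∀ i, SigmaFinite (μ i)]
    (f : ∀ i, α i → ENNReal) (hf : ∀ i, Measurable (f i)) (s : Finset ι) :
    ∀ x : ∀ i, α i, (∫⋯∫⁻_s, (fun y => ∏ i, f i (y i)) ∂μ) x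
      = (∏ i ∈ s, ∫⁻ y, f i y ∂μ i) * ∏ i ∈ sᶜ, f i (x i) := by
  induction s using Finset.induction with
  | empty =>
    intro x
    rw [MeasureTheory.lmarginal_empty, Finset.prod_empty, one_mul, Finset.compl_empty]
  | @insert i s hi ih =>
    intro x
    have hF : Measurable fun y : ∀ i, α i => ∏ i, f i (y i) :=
      Finset.measurable_prod _ fun i _ => (hf i).comp (measurable_pi_apply i)
    rw [MeasureTheory.lmarginal_insert _ hF hi x]
    have hmem : i ∈ sᶜ := Finset.mem_compl.mpr hi
    have step : ∀ y : α i, (∫⋯∫⁻_s, (fun y => ∏ i, f i (y i)) ∂μ) (Function.update x i y)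
        = ((∏ i ∈ s, ∫⁻ y, f i y ∂μ i) * ∏ i' ∈ sᶜ.erase i, f i' (x i')) * f i y := by
      intro y
      rw [ih]
      rw [← Finset.mul_prod_erase _ _ hmem]
      have : ∀ i' ∈ sᶜ.erase i, f i' (Function.update x i y i') = f i' (x i') := by
        intro i' hi'
        rw [Function.update_of_ne (Finset.ne_of_mem_erase hi')]
      rw [Finset.prod_congr rfl this, Function.update_self]
      ring
    simp_rw [step]
    rw [MeasureTheory.lintegral_const_mul _ (hf i), Finset.prod_insert hi, Finset.compl_insert]
    ring
  
theorem my_lintegral_pi {ι : Type*} [Fintype ι] [DecidableEq ι] {α : ι → Type*}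
    [∀ i, MeasurableSpace (α i)] (μ : ∀ i, Measure (α i)) [∀ i, SigmaFinite (μ i)]
    (f : ∀ i, α i → ENNReal) (hf : ∀ i, Measurable (f i)) (x₀ : ∀ i, α i) :
    ∫⁻ x, ∏ i, f i (x i) ∂Measure.pi μ = ∏ i, ∫⁻ y, f i y ∂μ i := by
  rw [MeasureTheory.lintegral_eq_lmarginal_univ x₀, my_lmarginal_prod μ f hf Finset.univ x₀,
    Finset.compl_univ, Finset.prod_empty, mul_one]

/-- One distinguished coordinate: `∫ f(y j) ∏ gk k (y k) = (∫ f·gk j) · ∏_{k≠j} ∫ gk k`,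
specialised to the case where all `∫ gk k = 1`. -/
theorem my_lintegral_pi_single {ι : Type*} [Fintype ι] [DecidableEq ι] {α : Type*}
    [MeasurableSpace α] (μ : Measure α) [SigmaFinite μ]
    (f : α → ENNReal) (gk : ι → α → ENNReal) (hfm : Measurable f)
    (hgm : ∀ k, Measurable (gk k)) (hg1 : ∀ k, ∫⁻ y, gk k y ∂μ = 1) (j : ι)
    (x₀ : ι → α) :
    ∫⁻ y : ι → α, f (y j) * ∏ k, gk k (y k) ∂Measure.pi (fun _ => μ)
      = ∫⁻ z, f z * gk j z ∂μ := by
  have h : ∀ y : ι → α, f (y j) * ∏ k, gk k (y k)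
      = ∏ k, (fun z => (if k = j then f z else 1) * gk k z) (y k) := by
    intro y
    rw [Finset.prod_mul_distrib]
    congr 1
    rw [Finset.prod_ite_eq' Finset.univ j (fun k => f (y k))]
    simp
  simp_rw [h]
  rw [my_lintegral_pi (fun _ => μ) (fun k z => (if k = j then f z else 1) * gk k z) (fun k => by
    by_cases hk : k = j
    · simpa [hk] using (hfm.fun_mul (hgm j))
    · simpa [hk] using hgm k) x₀]
  have : ∀ k, (∫⁻ z, (if k = j then f z else 1) * gk k z ∂μ)
      = if k = j then ∫⁻ z, f z * gk j z ∂μ else 1 := by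
    intro k
    by_cases hk : k = j <;> simp [hk, hg1 k]
  rw [Finset.prod_congr rfl (fun k _ => this k), Finset.prod_ite_eq' Finset.univ j
    (fun _ => ∫⁻ z, f z * gk j z ∂μ)]
  simp

section AuxMore
open MeasureTheory Finset

variable {N L : ℕ} [NeZero N]
variable {pobs : ℕ → ℝ → ℝ} {ptrans : ℕ → ℝ → ℝ → ℝ} {g : ℕ → ℝ → ℝ}

lemma dpfS_congr {u u' : ℕ → Fin N → ℝ} :
    ∀ t, (∀ s, s ≤ t → u s = u' s) →
      dpfS N L pobs ptrans g u t = dpfS N L pobs ptrans g u' t := by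
  intro t
  induction t with
  | zero => intro _; funext j; rw [dpfS_zero, dpfS_zero]
  | succ t ih =>
    intro h
    funext j
    have h1 : u (t + 1) = u' (t + 1) := h (t + 1) le_rfl
    have h2 : u t = u' t := h t (by omega)
    have h3 : dpfS N L pobs ptrans g u t = dpfS N L pobs ptrans g u' t :=
      ih fun s hs => h s (by omega)
    simp only [dpfS_succ, dpfStepW, Nat.add_sub_cancel, h1, h2, h3]

lemma dpfS_measurable {β : Type*} [MeasurableSpace β]
    (hpobs : ∀ t, Measurable (pobs t))
    (hptrans : ∀ t, Measurable fun q : ℝ × ℝ => ptrans t q.1 q.2)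
    (hg : ∀ t, Measurable (g t))
    (w : β → ℕ → Fin N → ℝ) (hw : ∀ s j, Measurable fun b => w b s j) :
    ∀ t j, Measurable fun b => dpfS N L pobs ptrans g (w b) t j := by
  intro t
  induction t with
  | zero => intro j; simp only [dpfS_zero]; exact measurable_const
  | succ t ih =>
    intro j
    simp only [dpfS_succ, dpfStepW, Nat.add_sub_cancel]
    refine Measurable.const_mul (Finset.measurable_sum _ fun l _ => ?_) _
    refine Measurable.div (Measurable.mul (Measurable.mul (ih _) ?_) ?_) ?_
    · exact (hpobs _).comp' (hw _ _)
    · exact (hptrans _).comp' ((hw _ _).prodMk (hw _ _))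
    · exact (hg _).comp' (hw _ _)

end AuxMore


lemma lint_ofReal_one {f : ℝ → ℝ} (hf : Measurable f) (h0 : ∀ x, 0 ≤ f x)
    (h1 : ∫ x, f x = 1) : ∫⁻ x, ENNReal.ofReal (f x) = 1 := by
  have h2 := integral_eq_lintegral_of_nonneg_ae (μ := (volume : Measure ℝ))
    (Filter.Eventually.of_forall h0) hf.aestronglyMeasurable
  rw [h1] at h2
  exact (ENNReal.toReal_eq_one_iff _).mp h2.symm

lemma range_succ_eq_insert_Icc (T : ℕ) : Finset.range (T + 1) = insert 0 (Finset.Icc 1 T) := by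
  ext s; simp only [Finset.mem_range, Finset.mem_insert, Finset.mem_Icc]; omega

lemma prod_fin_eq_zero_mul_Icc {M : Type*} [CommMonoid M] (T : ℕ) (f : Fin (T + 1) → M) :
    ∏ k : Fin (T + 1), f k = f 0 * ∏ s ∈ Finset.Icc 1 T, f (s : Fin (T + 1)) := by
  have h1 : ∏ k : Fin (T + 1), f k = ∏ s ∈ Finset.range (T + 1), f (s : Fin (T + 1)) := by
    rw [← Fin.prod_univ_eq_prod_range (fun s => f (s : Fin (T + 1))) (T + 1)]
    exact Finset.prod_congr rfl fun k _ => by rw [Fin.cast_val_eq_self]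
  rw [h1, range_succ_eq_insert_Icc, Finset.prod_insert (by simp), Nat.cast_zero]

lemma fin_cast_val {T : ℕ} {s : ℕ} (h : s ≤ T) : (((s : Fin (T + 1))) : ℕ) = s :=
  Fin.val_cast_of_lt (Nat.lt_succ_of_le h)

lemma fin_cast_ne {T : ℕ} {s s' : ℕ} (h : s ≤ T) (h' : s' ≤ T) (hss : s ≠ s') :
    (s : Fin (T + 1)) ≠ (s' : Fin (T + 1)) := by
  intro hc
  exact hss (by rw [← fin_cast_val h, ← fin_cast_val h', hc])

lemma Icc_succ_eq_insert {a b : ℕ} (h : a ≤ b) :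
    Finset.Icc a b = insert a (Finset.Icc (a + 1) b) := by
  ext s; simp only [Finset.mem_Icc, Finset.mem_insert]; omega

noncomputable def Rchain (p0 : ℝ → ℝ) (pobs : ℕ → ℝ → ℝ) (ptrans : ℕ → ℝ → ℝ → ℝ) :
    ℕ → (ℝ → ENNReal) → ENNReal
  | 0, φ => ∫⁻ x, ENNReal.ofReal (p0 x) * φ x
  | (t + 1), φ => Rchain p0 pobs ptrans t
      (fun x => ∫⁻ x', ENNReal.ofReal (pobs (t + 1) x')
        * (ENNReal.ofReal (ptrans (t + 1) x x') * φ x'))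

theorem main_chain (T : ℕ) (p0 : ℝ → ℝ) (pobs : ℕ → ℝ → ℝ) (ptrans : ℕ → ℝ → ℝ → ℝ)
    (g : ℕ → ℝ → ℝ)
    (hp0 : Measurable p0)
    (hpobs : ∀ t, Measurable (pobs t))
    (hptrans : ∀ t, Measurable fun q : ℝ × ℝ => ptrans t q.1 q.2)
    (hg : ∀ t, Measurable (g t)) (hg0 : ∀ t x, 0 ≤ g t x) (hgdens : ∀ t, ∫ x, g t x = 1) :
    ∀ t, t ≤ T → ∀ φ : ℝ → ENNReal, Measurable φ →
    ∫⁻ x : Fin (T + 1) → ℝ,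
      (ENNReal.ofReal (p0 (x 0)) * ∏ s ∈ Finset.Icc 1 t,
        (ENNReal.ofReal (pobs s (x (s : Fin (T + 1))))
          * ENNReal.ofReal (ptrans s (x ((s - 1 : ℕ) : Fin (T + 1))) (x (s : Fin (T + 1))))))
      * (φ (x (t : Fin (T + 1)))
          * ∏ s ∈ Finset.Icc (t + 1) T, ENNReal.ofReal (g s (x (s : Fin (T + 1)))))
      = Rchain p0 pobs ptrans t φ := by
  intro t
  induction t with
  | zero =>
    intro _ φ hφ
    have hpt : ∀ x : Fin (T + 1) → ℝ,
        (ENNReal.ofReal (p0 (x 0)) * ∏ s ∈ Finset.Icc 1 0,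
          (ENNReal.ofReal (pobs s (x (s : Fin (T + 1))))
            * ENNReal.ofReal (ptrans s (x ((s - 1 : ℕ) : Fin (T + 1))) (x (s : Fin (T + 1))))))
        * (φ (x ((0 : ℕ) : Fin (T + 1)))
            * ∏ s ∈ Finset.Icc (0 + 1) T, ENNReal.ofReal (g s (x (s : Fin (T + 1)))))
        = ∏ k : Fin (T + 1), (fun k (z : ℝ) => if k = (0 : Fin (T + 1)) then
            ENNReal.ofReal (p0 z) * φ z else ENNReal.ofReal (g (k : ℕ) z)) k (x k) := by
      intro x
      rw [prod_fin_eq_zero_mul_Icc T]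
      beta_reduce
      simp only [eq_self_iff_true, if_true]
      rw [show Finset.Icc 1 0 = (∅ : Finset ℕ) by simp, Finset.prod_empty, mul_one, zero_add,
        Nat.cast_zero]
      have : ∀ s ∈ Finset.Icc 1 T,
          (fun k (z : ℝ) => if k = (0 : Fin (T + 1)) then ENNReal.ofReal (p0 z) * φ z
            else ENNReal.ofReal (g (k : ℕ) z)) (s : Fin (T + 1)) (x (s : Fin (T + 1)))
          = ENNReal.ofReal (g s (x (s : Fin (T + 1)))) := by
        intro s hs
        simp only [Finset.mem_Icc] at hs
        have hne : (s : Fin (T + 1)) ≠ 0 := by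
          have := fin_cast_ne hs.2 (Nat.zero_le T) (by omega)
          simpa using this
        simp only [if_neg hne, fin_cast_val hs.2]
      rw [Finset.prod_congr rfl this]
      ring
    rw [lintegral_congr hpt, MeasureTheory.volume_pi,
      my_lintegral_pi (ι := Fin (T + 1)) (fun _ => (volume : Measure ℝ))
        (fun k z => if k = (0 : Fin (T + 1)) then ENNReal.ofReal (p0 z) * φ z
          else ENNReal.ofReal (g (k : ℕ) z))
        (fun k => by
          by_cases hk : k = 0
          · simpa [hk] using (hp0.ennreal_ofReal.fun_mul hφ)
          · simpa [hk] using (hg (k : ℕ)).ennreal_ofReal) (fun _ => (0 : ℝ))]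
    rw [prod_fin_eq_zero_mul_Icc T]
    beta_reduce
    simp only [eq_self_iff_true, if_true]
    have : ∀ s ∈ Finset.Icc 1 T,
        (∫⁻ y, (if (s : Fin (T + 1)) = (0 : Fin (T + 1)) then ENNReal.ofReal (p0 y) * φ y
          else ENNReal.ofReal (g ((s : Fin (T + 1)) : ℕ) y)) ∂volume) = 1 := by
      intro s hs
      simp only [Finset.mem_Icc] at hs
      have hne : (s : Fin (T + 1)) ≠ 0 := by
        have := fin_cast_ne hs.2 (Nat.zero_le T) (by omega)
        simpa using this
      simp only [if_neg hne, fin_cast_val hs.2]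
      exact lint_ofReal_one (hg s) (hg0 s) (hgdens s)
    rw [Finset.prod_congr rfl this, Finset.prod_const_one, mul_one, Rchain]
  | succ t ih =>
    intro ht φ hφ
    have htT : t ≤ T := Nat.le_of_succ_le ht
    set ψ : ℝ → ENNReal := fun z => ∫⁻ x', ENNReal.ofReal (pobs (t + 1) x')
        * (ENNReal.ofReal (ptrans (t + 1) z x') * φ x') with hψdef
    have hψ : Measurable ψ := by
      apply Measurable.lintegral_prod_right (f := fun z x' => ENNReal.ofReal (pobs (t + 1) x')
        * (ENNReal.ofReal (ptrans (t + 1) z x') * φ x'))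
      refine Measurable.mul ?_ (Measurable.mul ?_ ?_)
      · exact Measurable.ennreal_ofReal ((hpobs (t + 1)).comp' measurable_snd)
      · exact Measurable.ennreal_ofReal
          ((hptrans (t + 1)).comp' (measurable_fst.prodMk measurable_snd))
      · exact hφ.comp' measurable_snd
    have hR : Rchain p0 pobs ptrans (t + 1) φ = Rchain p0 pobs ptrans t ψ := rfl
    rw [hR, ← ih htT ψ hψ]
    -- now prove equality of the two lintegrals
    set i : Fin (T + 1) := ((t + 1 : ℕ) : Fin (T + 1)) with hidef
    set F₁ : (Fin (T + 1) → ℝ) → ENNReal := fun x =>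
      (ENNReal.ofReal (p0 (x 0)) * ∏ s ∈ Finset.Icc 1 (t + 1),
        (ENNReal.ofReal (pobs s (x (s : Fin (T + 1))))
          * ENNReal.ofReal (ptrans s (x ((s - 1 : ℕ) : Fin (T + 1))) (x (s : Fin (T + 1))))))
      * (φ (x ((t + 1 : ℕ) : Fin (T + 1)))
          * ∏ s ∈ Finset.Icc (t + 1 + 1) T, ENNReal.ofReal (g s (x (s : Fin (T + 1))))) with hF₁
    set F₀ : (Fin (T + 1) → ℝ) → ENNReal := fun x =>
      (ENNReal.ofReal (p0 (x 0)) * ∏ s ∈ Finset.Icc 1 t,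
        (ENNReal.ofReal (pobs s (x (s : Fin (T + 1))))
          * ENNReal.ofReal (ptrans s (x ((s - 1 : ℕ) : Fin (T + 1))) (x (s : Fin (T + 1))))))
      * (ψ (x ((t : ℕ) : Fin (T + 1)))
          * ∏ s ∈ Finset.Icc (t + 1) T, ENNReal.ofReal (g s (x (s : Fin (T + 1))))) with hF₀
    show ∫⁻ x, F₁ x = ∫⁻ x, F₀ x
    have hmeas_chain : ∀ (u : Finset ℕ), Measurable fun x : Fin (T + 1) → ℝ =>
        ∏ s ∈ u, (ENNReal.ofReal (pobs s (x (s : Fin (T + 1))))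
          * ENNReal.ofReal (ptrans s (x ((s - 1 : ℕ) : Fin (T + 1))) (x (s : Fin (T + 1))))) := by
      intro u
      refine Finset.measurable_prod _ fun s _ => Measurable.fun_mul ?_ ?_
      · exact Measurable.ennreal_ofReal ((hpobs s).comp' (measurable_pi_apply _))
      · exact Measurable.ennreal_ofReal
          ((hptrans s).comp' (show Measurable fun x : Fin (T + 1) → ℝ => (x ((s - 1 : ℕ) : Fin (T + 1)), x (s : Fin (T + 1))) from (measurable_pi_apply _).prodMk (measurable_pi_apply _)))
    have hmeas_g : ∀ (u : Finset ℕ), Measurable fun x : Fin (T + 1) → ℝ =>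
        ∏ s ∈ u, ENNReal.ofReal (g s (x (s : Fin (T + 1)))) :=
      fun u => Finset.measurable_prod _ fun s _ =>
        Measurable.ennreal_ofReal ((hg s).comp' (measurable_pi_apply _))
    have hmF₁ : Measurable F₁ := by
      refine ((Measurable.ennreal_ofReal (hp0.comp' (measurable_pi_apply 0))).mul
        (hmeas_chain _)).mul ?_
      exact (hφ.comp' (measurable_pi_apply _)).mul (hmeas_g _)
    have hmF₀ : Measurable F₀ := by
      refine ((Measurable.ennreal_ofReal (hp0.comp' (measurable_pi_apply 0))).mul
        (hmeas_chain _)).mul ?_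
      exact (hψ.comp' (measurable_pi_apply _)).mul (hmeas_g _)
    rw [MeasureTheory.volume_pi, lintegral_eq_lmarginal_univ (fun _ => (0 : ℝ)),
      lintegral_eq_lmarginal_univ (fun _ => (0 : ℝ))]
    rw [MeasureTheory.lmarginal_eq_of_subset (Finset.subset_univ {i}) hmF₁ hmF₀ ?_]
    funext x
    rw [MeasureTheory.lmarginal_singleton, MeasureTheory.lmarginal_singleton]
    -- key pointwise computation
    have hupd_ne : ∀ (y : ℝ) {s : ℕ}, s ≤ T → s ≠ t + 1 →
        Function.update x i y (s : Fin (T + 1)) = x (s : Fin (T + 1)) := by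
      intro y s hs hne
      exact Function.update_of_ne (fin_cast_ne hs ht hne) _ _
    have hupd_i : ∀ (y : ℝ), Function.update x i y ((t + 1 : ℕ) : Fin (T + 1)) = y := by
      intro y; rw [← hidef]; exact Function.update_self _ _ _
    have hupd_0 : ∀ (y : ℝ), Function.update x i y 0 = x 0 := by
      intro y
      have h0 : ((0 : ℕ) : Fin (T + 1)) = (0 : Fin (T + 1)) := by simp
      rw [← h0]
      exact hupd_ne y (Nat.zero_le T) (by omega)
    set K : ENNReal := (ENNReal.ofReal (p0 (x 0)) * ∏ s ∈ Finset.Icc 1 t,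
        (ENNReal.ofReal (pobs s (x (s : Fin (T + 1))))
          * ENNReal.ofReal (ptrans s (x ((s - 1 : ℕ) : Fin (T + 1))) (x (s : Fin (T + 1))))))
        * ∏ s ∈ Finset.Icc (t + 1 + 1) T, ENNReal.ofReal (g s (x (s : Fin (T + 1)))) with hK
    have hchain_upd : ∀ (y : ℝ) (u : Finset ℕ), (∀ s ∈ u, s ≤ t) →
        ∏ s ∈ u, (ENNReal.ofReal (pobs s (Function.update x i y (s : Fin (T + 1))))
          * ENNReal.ofReal (ptrans s (Function.update x i y ((s - 1 : ℕ) : Fin (T + 1)))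
              (Function.update x i y (s : Fin (T + 1)))))
        = ∏ s ∈ u, (ENNReal.ofReal (pobs s (x (s : Fin (T + 1))))
          * ENNReal.ofReal (ptrans s (x ((s - 1 : ℕ) : Fin (T + 1))) (x (s : Fin (T + 1))))) := by
      intro y u hu
      refine Finset.prod_congr rfl fun s hs => ?_
      have h1 := hu s hs
      rw [hupd_ne y (le_trans h1 htT) (by omega),
        hupd_ne y (le_trans (Nat.sub_le s 1) (le_trans h1 htT)) (by omega)]
    have hgp_upd : ∀ (y : ℝ) (a : ℕ), t + 1 + 1 ≤ a →
        ∀ s ∈ Finset.Icc a T, ENNReal.ofReal (g s (Function.update x i y (s : Fin (T + 1))))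
          = ENNReal.ofReal (g s (x (s : Fin (T + 1)))) := by
      intro y a ha s hs
      simp only [Finset.mem_Icc] at hs
      rw [hupd_ne y hs.2 (by omega)]
    have h1 : ∀ y : ℝ, F₁ (Function.update x i y)
        = K * (ENNReal.ofReal (pobs (t + 1) y)
            * (ENNReal.ofReal (ptrans (t + 1) (x ((t : ℕ) : Fin (T + 1))) y) * φ y)) := by
      intro y
      rw [hF₁]
      simp only
      rw [Finset.prod_Icc_succ_top (Nat.le_add_left 1 t), hupd_0,
        hchain_upd y _ (fun s hs => (Finset.mem_Icc.mp hs).2), hupd_i y,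
        Finset.prod_congr rfl (hgp_upd y (t + 1 + 1) le_rfl)]
      have hsub : (t + 1 - 1 : ℕ) = t := by omega
      rw [hsub, hupd_ne y htT (by omega), hK]
      ring
    have h0 : ∀ y : ℝ, F₀ (Function.update x i y)
        = (K * ψ (x ((t : ℕ) : Fin (T + 1)))) * ENNReal.ofReal (g (t + 1) y) := by
      intro y
      rw [hF₀]
      simp only
      rw [hupd_0, hchain_upd y _ (fun s hs => (Finset.mem_Icc.mp hs).2),
        hupd_ne y htT (by omega),
        Icc_succ_eq_insert ht, Finset.prod_insert (by simp [Finset.mem_Icc]),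
        hupd_i y, Finset.prod_congr rfl (hgp_upd y (t + 1 + 1) le_rfl), hK]
      ring
    simp_rw [h1, h0]
    have hmm : Measurable (fun y : ℝ => ENNReal.ofReal (pobs (t + 1) y)
        * (ENNReal.ofReal (ptrans (t + 1) (x ((t : ℕ) : Fin (T + 1))) y) * φ y)) := by
      refine Measurable.mul ?_ (Measurable.mul ?_ hφ)
      · exact Measurable.ennreal_ofReal (hpobs (t + 1))
      · exact Measurable.ennreal_ofReal
          ((hptrans (t + 1)).comp' (measurable_const.prodMk measurable_id))
    rw [lintegral_const_mul _ hmm,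
      lintegral_const_mul _ (Measurable.ennreal_ofReal (hg (t + 1))),
      lint_ofReal_one (hg (t + 1)) (hg0 (t + 1)) (hgdens (t + 1)), mul_one]

section MainParticle
open MeasureTheory Finset

theorem main_particle (N L T : ℕ) [NeZero N] (hL1 : 1 ≤ L)
    (p0 : ℝ → ℝ) (pobs : ℕ → ℝ → ℝ) (ptrans : ℕ → ℝ → ℝ → ℝ) (g : ℕ → ℝ → ℝ)
    (hp0 : Measurable p0) (hp00 : ∀ x, 0 ≤ p0 x) (hp0dens : ∫ x, p0 x = 1)
    (hpobs : ∀ t, Measurable (pobs t)) (hpobs0 : ∀ t x, 0 ≤ pobs t x)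
    (hptrans : ∀ t, Measurable fun q : ℝ × ℝ => ptrans t q.1 q.2)
    (hptrans0 : ∀ t x x', 0 ≤ ptrans t x x')
    (hg : ∀ t, Measurable (g t)) (hgpos : ∀ t x, 0 < g t x)
    (hgdens : ∀ t, ∫ x, g t x = 1) :
    ∀ t, t ≤ T → ∀ φ : ℝ → ENNReal, Measurable φ →
    ∫⁻ v : Fin (T + 1) → Fin N → ℝ,
      (∑ j : Fin N, ENNReal.ofReal
          (dpfS N L pobs ptrans g (fun s => v (s : Fin (T + 1))) t j)
            * φ (v (t : Fin (T + 1)) j))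
        * (ENNReal.ofReal (∏ j : Fin N, p0 (v 0 j))
            * ∏ s ∈ Finset.Icc 1 T, ∏ j : Fin N, ENNReal.ofReal (g s (v (s : Fin (T + 1)) j)))
      = Rchain p0 pobs ptrans t φ := by
  have hg0 : ∀ t x, 0 ≤ g t x := fun t x => (hgpos t x).le
  classical
  set Ds : Fin (T + 1) → (Fin N → ℝ) → ENNReal := fun s y =>
    if s = 0 then ∏ j : Fin N, ENNReal.ofReal (p0 (y j))
    else ∏ j : Fin N, ENNReal.ofReal (g (s : ℕ) (y j)) with hDs
  have hDsm : ∀ s, Measurable (Ds s) := by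
    intro s
    by_cases h : s = 0
    · simp only [hDs, if_pos h]
      exact Finset.measurable_prod _ fun j _ =>
        Measurable.ennreal_ofReal (hp0.comp' (measurable_pi_apply j))
    · simp only [hDs, if_neg h]
      exact Finset.measurable_prod _ fun j _ =>
        Measurable.ennreal_ofReal ((hg _).comp' (measurable_pi_apply j))
  have hDs1 : ∀ s, ∫⁻ y : Fin N → ℝ, Ds s y = 1 := by
    intro s
    by_cases h : s = 0
    · simp only [hDs, if_pos h]
      rw [MeasureTheory.volume_pi, my_lintegral_pi (fun _ : Fin N => (volume : Measure ℝ))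
        (fun _ z => ENNReal.ofReal (p0 z)) (fun _ => hp0.ennreal_ofReal) (fun _ => 0)]
      rw [Finset.prod_congr rfl fun j _ => lint_ofReal_one hp0 hp00 hp0dens,
        Finset.prod_const_one]
    · simp only [hDs, if_neg h]
      rw [MeasureTheory.volume_pi, my_lintegral_pi (fun _ : Fin N => (volume : Measure ℝ))
        (fun _ z => ENNReal.ofReal (g (s : ℕ) z)) (fun _ => (hg _).ennreal_ofReal) (fun _ => 0)]
      rw [Finset.prod_congr rfl fun j _ => lint_ofReal_one (hg _) (hg0 _) (hgdens _),
        Finset.prod_const_one]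
  have hDeq : ∀ v : Fin (T + 1) → Fin N → ℝ,
      ENNReal.ofReal (∏ j : Fin N, p0 (v 0 j))
        * ∏ s ∈ Finset.Icc 1 T, ∏ j : Fin N, ENNReal.ofReal (g s (v (s : Fin (T + 1)) j))
      = ∏ s : Fin (T + 1), Ds s (v s) := by
    intro v
    rw [prod_fin_eq_zero_mul_Icc T (fun s => Ds s (v s))]
    congr 1
    · rw [hDs]; beta_reduce
      rw [if_pos rfl, ENNReal.ofReal_prod_of_nonneg (fun j _ => hp00 _)]
    · refine Finset.prod_congr rfl fun s hs => ?_
      simp only [Finset.mem_Icc] at hs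
      have hne : ((s : ℕ) : Fin (T + 1)) ≠ 0 := by
        have := fin_cast_ne hs.2 (Nat.zero_le T) (by omega)
        simpa using this
      rw [hDs]; beta_reduce
      rw [if_neg hne, fin_cast_val hs.2]
  have hDm : Measurable fun v : Fin (T + 1) → Fin N → ℝ => ∏ s, Ds s (v s) :=
    Finset.measurable_prod _ fun s _ => (hDsm s).comp' (measurable_pi_apply s)
  intro t
  induction t with
  | zero =>
    intro _ φ hφ
    have hpt : ∀ v : Fin (T + 1) → Fin N → ℝ,
        (∑ j : Fin N, ENNReal.ofReal
            (dpfS N L pobs ptrans g (fun s => v (s : Fin (T + 1))) 0 j)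
              * φ (v ((0 : ℕ) : Fin (T + 1)) j))
          * (ENNReal.ofReal (∏ j : Fin N, p0 (v 0 j))
              * ∏ s ∈ Finset.Icc 1 T, ∏ j : Fin N, ENNReal.ofReal (g s (v (s : Fin (T + 1)) j)))
        = ∑ j : Fin N, ENNReal.ofReal ((N : ℝ)⁻¹)
            * ((fun y : Fin N → ℝ => φ (y j)) (v 0) * ∏ s, Ds s (v s)) := by
      intro v
      rw [hDeq v, Finset.sum_mul]
      refine Finset.sum_congr rfl fun j _ => ?_
      rw [dpfS_zero, Nat.cast_zero, mul_assoc]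
    rw [lintegral_congr hpt, lintegral_finset_sum _ (fun j _ => Measurable.const_mul
      (((hφ.comp' ((measurable_pi_apply j).comp' (measurable_pi_apply 0)))).fun_mul hDm) _)]
    have hIj : ∀ j : Fin N, ∫⁻ v : Fin (T + 1) → Fin N → ℝ,
        (fun y : Fin N → ℝ => φ (y j)) (v 0) * ∏ s, Ds s (v s)
        = ∫⁻ x, φ x * ENNReal.ofReal (p0 x) := by
      intro j
      rw [MeasureTheory.volume_pi, my_lintegral_pi_single
        (volume : Measure (Fin N → ℝ)) (fun y : Fin N → ℝ => φ (y j)) Ds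
        (hφ.comp' (measurable_pi_apply j)) hDsm hDs1 0 (fun _ _ => 0)]
      have : ∀ z : Fin N → ℝ, (fun y : Fin N → ℝ => φ (y j)) z * Ds 0 z
          = φ (z j) * ∏ k : Fin N, ENNReal.ofReal (p0 (z k)) := by
        intro z
        rw [hDs]; beta_reduce; rw [if_pos rfl]
      rw [lintegral_congr this, MeasureTheory.volume_pi, my_lintegral_pi_single
        (volume : Measure ℝ) φ (fun _ z => ENNReal.ofReal (p0 z)) hφ
        (fun _ => hp0.ennreal_ofReal) (fun _ => lint_ofReal_one hp0 hp00 hp0dens) j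
        (fun _ => 0)]
    rw [Finset.sum_congr rfl fun j _ => by rw [lintegral_const_mul _
      (((hφ.comp' ((measurable_pi_apply j).comp' (measurable_pi_apply 0)))).fun_mul hDm), hIj j]]
    rw [Finset.sum_const, Finset.card_univ, Fintype.card_fin, nsmul_eq_mul]
    have hNinv : (N : ENNReal) * ENNReal.ofReal ((N : ℝ)⁻¹) = 1 := by
      have hNpos : (0 : ℝ) < (N : ℝ) := by
        have := NeZero.ne N; positivity
      rw [ENNReal.ofReal_inv_of_pos hNpos, ENNReal.ofReal_natCast]
      exact ENNReal.mul_inv_cancel (by exact_mod_cast (NeZero.ne N)) (ENNReal.natCast_ne_top N)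
    rw [← mul_assoc, hNinv, one_mul]
    show _ = Rchain p0 pobs ptrans 0 φ
    rw [Rchain]
    exact lintegral_congr fun x => mul_comm _ _
  | succ t ih =>
    intro ht φ hφ
    have htT : t ≤ T := Nat.le_of_succ_le ht
    set ψ : ℝ → ENNReal := fun z => ∫⁻ x', ENNReal.ofReal (pobs (t + 1) x')
        * (ENNReal.ofReal (ptrans (t + 1) z x') * φ x') with hψdef
    have hψ : Measurable ψ := by
      apply Measurable.lintegral_prod_right (f := fun z x' => ENNReal.ofReal (pobs (t + 1) x')
        * (ENNReal.ofReal (ptrans (t + 1) z x') * φ x'))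
      refine Measurable.mul ?_ (Measurable.mul ?_ ?_)
      · exact Measurable.ennreal_ofReal ((hpobs (t + 1)).comp' measurable_snd)
      · exact Measurable.ennreal_ofReal
          ((hptrans (t + 1)).comp' (measurable_fst.prodMk measurable_snd))
      · exact hφ.comp' measurable_snd
    have hR : Rchain p0 pobs ptrans (t + 1) φ = Rchain p0 pobs ptrans t ψ := rfl
    rw [hR, ← ih htT ψ hψ]
    set i : Fin (T + 1) := ((t + 1 : ℕ) : Fin (T + 1)) with hidef
    have hSm : ∀ t' (j : Fin N), Measurable fun v : Fin (T + 1) → Fin N → ℝ =>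
        dpfS N L pobs ptrans g (fun s => v (s : Fin (T + 1))) t' j :=
      dpfS_measurable hpobs hptrans hg _ (fun s j =>
        (measurable_pi_apply j).comp' (measurable_pi_apply ((s : Fin (T + 1)))))
    set F₁ : (Fin (T + 1) → Fin N → ℝ) → ENNReal := fun v =>
      (∑ j : Fin N, ENNReal.ofReal
          (dpfS N L pobs ptrans g (fun s => v (s : Fin (T + 1))) (t + 1) j)
            * φ (v ((t + 1 : ℕ) : Fin (T + 1)) j)) * ∏ s, Ds s (v s) with hF₁
    set F₀ : (Fin (T + 1) → Fin N → ℝ) → ENNReal := fun v =>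
      (∑ j : Fin N, ENNReal.ofReal
          (dpfS N L pobs ptrans g (fun s => v (s : Fin (T + 1))) t j)
            * ψ (v ((t : ℕ) : Fin (T + 1)) j)) * ∏ s, Ds s (v s) with hF₀
    have hmF : ∀ (t' : ℕ) (φ' : ℝ → ENNReal), Measurable φ' → Measurable fun v :
        Fin (T + 1) → Fin N → ℝ =>
        (∑ j : Fin N, ENNReal.ofReal
            (dpfS N L pobs ptrans g (fun s => v (s : Fin (T + 1))) t' j)
              * φ' (v ((t' : ℕ) : Fin (T + 1)) j)) * ∏ s, Ds s (v s) := by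
      intro t' φ' hφ'
      refine Measurable.mul (Finset.measurable_sum _ fun j _ => ?_) hDm
      exact ((hSm t' j).ennreal_ofReal).mul
        (hφ'.comp' ((measurable_pi_apply j).comp' (measurable_pi_apply _)))
    have key : ∫⁻ v, F₁ v = ∫⁻ v, F₀ v := by
      rw [MeasureTheory.volume_pi, lintegral_eq_lmarginal_univ (fun _ _ => (0 : ℝ)),
        lintegral_eq_lmarginal_univ (fun _ _ => (0 : ℝ)),
        MeasureTheory.lmarginal_eq_of_subset (Finset.subset_univ {i})
          (hmF (t + 1) φ hφ) (hmF t ψ hψ) ?_]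
      funext v
      rw [MeasureTheory.lmarginal_singleton, MeasureTheory.lmarginal_singleton]
      -- abbreviations
      set S : Fin N → ℝ := dpfS N L pobs ptrans g (fun s => v (s : Fin (T + 1))) t with hSdef
      have hS0 : ∀ k, 0 ≤ S k := fun k => dpfS_nonneg hpobs0 hptrans0 hg0 _ t k
      set G : ℝ → ENNReal := fun z => ENNReal.ofReal (g (t + 1) z) with hGdef
      set h : Fin N → ℝ → ENNReal := fun k z =>
        (ENNReal.ofReal (pobs (t + 1) z)
          * (ENNReal.ofReal (ptrans (t + 1) (v ((t : ℕ) : Fin (T + 1)) k) z) * φ z)) / G z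
        with hhdef
      have hhm : ∀ k, Measurable (h k) := by
        intro k
        refine Measurable.div (Measurable.mul ?_ (Measurable.mul ?_ hφ)) ?_
        · exact Measurable.ennreal_ofReal (hpobs (t + 1))
        · exact Measurable.ennreal_ofReal
            ((hptrans (t + 1)).comp' (measurable_const.prodMk measurable_id))
        · exact Measurable.ennreal_ofReal (hg (t + 1))
      set Drest : ENNReal := ∏ s ∈ (Finset.univ : Finset (Fin (T + 1))).erase i, Ds s (v s)
        with hDrest
      have hupd_ne : ∀ (a : Fin N → ℝ) {s : ℕ}, s ≤ T → s ≠ t + 1 →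
          Function.update v i a ((s : ℕ) : Fin (T + 1)) = v ((s : ℕ) : Fin (T + 1)) := by
        intro a s hs hne
        exact Function.update_of_ne (fin_cast_ne hs ht hne) _ _
      have hupd_i : ∀ a : Fin N → ℝ, Function.update v i a ((t + 1 : ℕ) : Fin (T + 1)) = a :=
        fun a => Function.update_self _ _ _
      have hScongr : ∀ a : Fin N → ℝ,
          dpfS N L pobs ptrans g (fun s => Function.update v i a (s : Fin (T + 1))) t = S := by
        intro a
        refine dpfS_congr t fun s hs => ?_
        exact hupd_ne a (le_trans hs htT) (by omega)
      have hD_upd : ∀ a : Fin N → ℝ,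
          (∏ s, Ds s (Function.update v i a s)) = (∏ k : Fin N, G (a k)) * Drest := by
        intro a
        rw [← Finset.mul_prod_erase Finset.univ _ (Finset.mem_univ i)]
        congr 1
        · rw [Function.update_self]
          have hi0 : i ≠ 0 := by
            rw [hidef, show (0 : Fin (T + 1)) = ((0 : ℕ) : Fin (T + 1)) from (Nat.cast_zero).symm]
            exact fin_cast_ne ht (Nat.zero_le T) (by omega)
          rw [hDs]; beta_reduce
          rw [if_neg hi0, hidef, fin_cast_val ht]
        · exact Finset.prod_congr rfl fun s hs =>
            congrArg _ (Function.update_of_ne (Finset.ne_of_mem_erase hs) _ _)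
      have hSstep : ∀ (a : Fin N → ℝ) (j : Fin N),
          dpfS N L pobs ptrans g (fun s => Function.update v i a (s : Fin (T + 1))) (t + 1) j
          = (L : ℝ)⁻¹ * ∑ l ∈ Finset.range L,
              S (j + (l : Fin N)) * pobs (t + 1) (a j)
                * ptrans (t + 1) (v ((t : ℕ) : Fin (T + 1)) (j + (l : Fin N))) (a j)
                / g (t + 1) (a j) := by
        intro a j
        rw [dpfS_succ]
        unfold dpfStepW
        simp only [Nat.add_sub_cancel]
        rw [hScongr a]
        have h1 : Function.update v i a ((t + 1 : ℕ) : Fin (T + 1)) = a := hupd_i a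
        have h2 : Function.update v i a ((t : ℕ) : Fin (T + 1)) = v ((t : ℕ) : Fin (T + 1)) :=
          hupd_ne a htT (by omega)
        rw [h1, h2]
      -- pointwise form of F₁ ∘ update
      have hofS : ∀ (a : Fin N → ℝ) (j : Fin N),
          ENNReal.ofReal (dpfS N L pobs ptrans g
              (fun s => Function.update v i a (s : Fin (T + 1))) (t + 1) j)
          = ENNReal.ofReal ((L : ℝ)⁻¹) * ∑ l ∈ Finset.range L,
              ENNReal.ofReal (S (j + (l : Fin N)))
                * ((ENNReal.ofReal (pobs (t + 1) (a j))
                  * ENNReal.ofReal (ptrans (t + 1)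
                      (v ((t : ℕ) : Fin (T + 1)) (j + (l : Fin N))) (a j))) / G (a j)) := by
        intro a j
        rw [hSstep a j, ENNReal.ofReal_mul (by positivity),
          ENNReal.ofReal_sum_of_nonneg (fun l _ => by
            have := hS0 (j + (l : Fin N))
            have := hpobs0 (t + 1) (a j)
            have := hptrans0 (t + 1) (v ((t : ℕ) : Fin (T + 1)) (j + (l : Fin N))) (a j)
            have := (hgpos (t + 1) (a j)).le
            positivity)]
        congr 1
        refine Finset.sum_congr rfl fun l _ => ?_
        rw [ENNReal.ofReal_div_of_pos (hgpos (t + 1) (a j)),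
          ENNReal.ofReal_mul (mul_nonneg (hS0 _) (hpobs0 _ _)),
          ENNReal.ofReal_mul (hS0 _)]
        simp only [hGdef, div_eq_mul_inv]
        ring
      have hpt1 : ∀ a : Fin N → ℝ, F₁ (Function.update v i a)
          = ∑ j : Fin N, ∑ l ∈ Finset.range L,
              (ENNReal.ofReal ((L : ℝ)⁻¹) * ENNReal.ofReal (S (j + (l : Fin N))) * Drest)
                * (h (j + (l : Fin N)) (a j) * ∏ k : Fin N, G (a k)) := by
        intro a
        rw [hF₁]
        beta_reduce
        rw [hD_upd a, Finset.sum_mul]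
        refine Finset.sum_congr rfl fun j _ => ?_
        rw [hofS a j, hupd_i a, Finset.mul_sum, Finset.sum_mul, Finset.sum_mul]
        refine Finset.sum_congr rfl fun l _ => ?_
        rw [hhdef]
        beta_reduce
        simp only [div_eq_mul_inv]
        ring
      have hpt0 : ∀ a : Fin N → ℝ, F₀ (Function.update v i a)
          = ((∑ k : Fin N, ENNReal.ofReal (S k) * ψ (v ((t : ℕ) : Fin (T + 1)) k)) * Drest)
              * ∏ k : Fin N, G (a k) := by
        intro a
        rw [hF₀]
        beta_reduce
        rw [hD_upd a, hScongr a, hupd_ne a htT (by omega)]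
        ring
      show ∫⁻ a : Fin N → ℝ, F₁ (Function.update v i a)
          = ∫⁻ a : Fin N → ℝ, F₀ (Function.update v i a)
      rw [lintegral_congr hpt1, lintegral_congr hpt0]
      -- compute both integrals
      have hG1 : ∫⁻ z, G z ∂(volume : Measure ℝ) = 1 :=
        lint_ofReal_one (hg (t + 1)) (hg0 (t + 1)) (hgdens (t + 1))
      have hGm : Measurable G := (hg (t + 1)).ennreal_ofReal
      have hprodG : ∫⁻ a : Fin N → ℝ, ∏ k : Fin N, G (a k) = 1 := by
        rw [MeasureTheory.volume_pi, my_lintegral_pi (fun _ : Fin N => (volume : Measure ℝ))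
          (fun _ => G) (fun _ => hGm) (fun _ => 0)]
        rw [Finset.prod_congr rfl fun k _ => hG1, Finset.prod_const_one]
      have hint_h : ∀ k j : Fin N, ∫⁻ a : Fin N → ℝ, h k (a j) * ∏ k' : Fin N, G (a k')
          = ψ (v ((t : ℕ) : Fin (T + 1)) k) := by
        intro k j
        rw [MeasureTheory.volume_pi, my_lintegral_pi_single (volume : Measure ℝ)
          (h k) (fun _ => G) (hhm k) (fun _ => hGm) (fun _ => hG1) j (fun _ => 0)]
        refine lintegral_congr fun z => ?_
        rw [hhdef]
        beta_reduce
        rw [ENNReal.div_mul_cancel (by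
            rw [hGdef]; simpa [ENNReal.ofReal_pos] using hgpos (t + 1) z)
          (by rw [hGdef]; exact ENNReal.ofReal_ne_top)]
      rw [lintegral_finset_sum _ (fun j _ => Finset.measurable_sum _ fun l _ =>
        Measurable.const_mul (((hhm _).comp' (measurable_pi_apply j)).fun_mul
          (Finset.measurable_prod _ fun k _ => hGm.comp' (measurable_pi_apply k))) _)]
      rw [Finset.sum_congr rfl fun j _ => lintegral_finset_sum _ (fun l _ =>
        Measurable.const_mul (((hhm _).comp' (measurable_pi_apply j)).fun_mul
          (Finset.measurable_prod _ fun k _ => hGm.comp' (measurable_pi_apply k))) _)]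
      rw [Finset.sum_congr rfl fun j _ => Finset.sum_congr rfl fun l _ => by
        rw [lintegral_const_mul _ (((hhm _).comp' (measurable_pi_apply j)).fun_mul
          (Finset.measurable_prod _ fun k _ => hGm.comp' (measurable_pi_apply k))),
          hint_h (j + (l : Fin N)) j]]
      rw [lintegral_const_mul _ (Finset.measurable_prod _ fun k _ =>
        hGm.comp' (measurable_pi_apply k)), hprodG, mul_one]
      -- reindex the double sum
      rw [Finset.sum_comm]
      have hre : ∀ l ∈ Finset.range L,
          ∑ j : Fin N, (ENNReal.ofReal ((L : ℝ)⁻¹) * ENNReal.ofReal (S (j + (l : Fin N))) * Drest)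
            * ψ (v ((t : ℕ) : Fin (T + 1)) (j + (l : Fin N)))
          = ENNReal.ofReal ((L : ℝ)⁻¹) * Drest
              * ∑ k : Fin N, ENNReal.ofReal (S k) * ψ (v ((t : ℕ) : Fin (T + 1)) k) := by
        intro l _
        rw [Finset.mul_sum]
        rw [← Equiv.sum_comp (Equiv.addRight ((l : ℕ) : Fin N))
          (fun k => ENNReal.ofReal ((L : ℝ)⁻¹) * Drest * (ENNReal.ofReal (S k)
            * ψ (v ((t : ℕ) : Fin (T + 1)) k)))]
        refine Finset.sum_congr rfl fun j _ => ?_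
        show _ = ENNReal.ofReal ((L : ℝ)⁻¹) * Drest * (ENNReal.ofReal (S (j + (l : Fin N)))
          * ψ (v ((t : ℕ) : Fin (T + 1)) (j + (l : Fin N))))
        ring
      rw [Finset.sum_congr rfl hre, Finset.sum_const, Finset.card_range, nsmul_eq_mul]
      have hLinv : (L : ENNReal) * ENNReal.ofReal ((L : ℝ)⁻¹) = 1 := by
        have hLpos : (0 : ℝ) < (L : ℝ) := by positivity
        rw [ENNReal.ofReal_inv_of_pos hLpos, ENNReal.ofReal_natCast]
        exact ENNReal.mul_inv_cancel (by exact_mod_cast (Nat.one_le_iff_ne_zero.mp hL1))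
          (ENNReal.natCast_ne_top L)
      calc (L : ENNReal) * (ENNReal.ofReal ((L : ℝ)⁻¹) * Drest
            * ∑ k : Fin N, ENNReal.ofReal (S k) * ψ (v ((t : ℕ) : Fin (T + 1)) k))
          = ((L : ENNReal) * ENNReal.ofReal ((L : ℝ)⁻¹)) * (Drest
            * ∑ k : Fin N, ENNReal.ofReal (S k) * ψ (v ((t : ℕ) : Fin (T + 1)) k)) := by ring
        _ = (∑ k : Fin N, ENNReal.ofReal (S k) * ψ (v ((t : ℕ) : Fin (T + 1)) k)) * Drest := by
            rw [hLinv, one_mul]; ring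
    calc ∫⁻ v : Fin (T + 1) → Fin N → ℝ,
        (∑ j : Fin N, ENNReal.ofReal
            (dpfS N L pobs ptrans g (fun s => v (s : Fin (T + 1))) (t + 1) j)
              * φ (v ((t + 1 : ℕ) : Fin (T + 1)) j))
          * (ENNReal.ofReal (∏ j : Fin N, p0 (v 0 j))
              * ∏ s ∈ Finset.Icc 1 T, ∏ j : Fin N, ENNReal.ofReal (g s (v (s : Fin (T + 1)) j)))
        = ∫⁻ v, F₁ v := lintegral_congr fun v => by rw [hF₁]; beta_reduce; rw [hDeq v]
      _ = ∫⁻ v, F₀ v := key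
      _ = _ := lintegral_congr fun v => by rw [hF₀]; beta_reduce; rw [hDeq v]
end MainParticle


/-- Theorem 1: unbiasedness of the DPF likelihood estimator with `L`
cyclic-permutation matching, `1 ≤ L ≤ N`.  The initial particles are i.i.d.
draws from `p0`, and at each step `t` the new particles are i.i.d. draws from
the positive proposal density `g t`; the joint law of the particle array is
hence the product measure with density
`(∏_j p0(u_{0,j})) ∏_{t=1}^T ∏_j g_t(u_{t,j})`.  The expectation of
`p̂(y_{1:T})` equals `p(y_{1:T}) = ∫⋯∫ p(x_0) ∏_t p(y_t|x_t) p(x_t|x_{t-1}) dx_{0:T}`. -/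
theorem dpf_likelihood_unbiased
    (N L T : ℕ) [NeZero N] (hL1 : 1 ≤ L) (hLN : L ≤ N) (hT : 1 ≤ T)
    (p0 : ℝ → ℝ) (pobs : ℕ → ℝ → ℝ) (ptrans : ℕ → ℝ → ℝ → ℝ) (g : ℕ → ℝ → ℝ)
    (hp0 : Measurable p0) (hp00 : ∀ x, 0 ≤ p0 x) (hp0dens : ∫ x, p0 x = 1)
    (hpobs : ∀ t, Measurable (pobs t)) (hpobs0 : ∀ t x, 0 ≤ pobs t x)
    (hptrans : ∀ t, Measurable fun q : ℝ × ℝ => ptrans t q.1 q.2)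
    (hptrans0 : ∀ t x x', 0 ≤ ptrans t x x')
    (hptransdens : ∀ t x', ∫ x, ptrans t x' x = 1)
    (hg : ∀ t, Measurable (g t)) (hgpos : ∀ t x, 0 < g t x)
    (hgdens : ∀ t, ∫ x, g t x = 1)
    (hint : Integrable
        (fun v : Fin (T + 1) → Fin N → ℝ =>
          dpfLikeEst N L pobs ptrans g T (fun t => v (t : Fin (T + 1))) *
            ((∏ j : Fin N, p0 (v 0 j)) *
              ∏ t ∈ Finset.Icc 1 T, ∏ j : Fin N, g t (v (t : Fin (T + 1)) j)))
        volume)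
    (hintRHS : Integrable
        (fun x : Fin (T + 1) → ℝ =>
          p0 (x 0) * ∏ t ∈ Finset.Icc 1 T,
            pobs t (x (t : Fin (T + 1))) *
              ptrans t (x ((t - 1 : ℕ) : Fin (T + 1))) (x (t : Fin (T + 1))))
        volume) :
    ∫ v : Fin (T + 1) → Fin N → ℝ,
        dpfLikeEst N L pobs ptrans g T (fun t => v (t : Fin (T + 1))) *
          ((∏ j : Fin N, p0 (v 0 j)) *
            ∏ t ∈ Finset.Icc 1 T, ∏ j : Fin N, g t (v (t : Fin (T + 1)) j))
      = ∫ x : Fin (T + 1) → ℝ,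
          p0 (x 0) * ∏ t ∈ Finset.Icc 1 T,
            pobs t (x (t : Fin (T + 1))) *
              ptrans t (x ((t - 1 : ℕ) : Fin (T + 1))) (x (t : Fin (T + 1))) := by
  have hg0 : ∀ t x, 0 ≤ g t x := fun t x => (hgpos t x).le
  have hrw1 : (fun v : Fin (T + 1) → Fin N → ℝ =>
      dpfLikeEst N L pobs ptrans g T (fun t => v (t : Fin (T + 1))) *
        ((∏ j : Fin N, p0 (v 0 j)) *
          ∏ t ∈ Finset.Icc 1 T, ∏ j : Fin N, g t (v (t : Fin (T + 1)) j)))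
      = fun v : Fin (T + 1) → Fin N → ℝ =>
        (∑ j : Fin N, dpfS N L pobs ptrans g (fun t => v (t : Fin (T + 1))) T j) *
        ((∏ j : Fin N, p0 (v 0 j)) *
          ∏ t ∈ Finset.Icc 1 T, ∏ j : Fin N, g t (v (t : Fin (T + 1)) j)) := by
    funext v
    rw [dpfLikeEst_eq_sum_dpfS hpobs0 hptrans0 hg0 _ T]
  rw [hrw1]
  have hSmv : ∀ j : Fin N, Measurable fun v : Fin (T + 1) → Fin N → ℝ =>
      dpfS N L pobs ptrans g (fun t => v (t : Fin (T + 1))) T j :=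
    fun j => dpfS_measurable hpobs hptrans hg _
      (fun s j' => (measurable_pi_apply j').comp' (measurable_pi_apply _)) T j
  have hdensm : Measurable fun v : Fin (T + 1) → Fin N → ℝ =>
      (∏ j : Fin N, p0 (v 0 j)) *
        ∏ t ∈ Finset.Icc 1 T, ∏ j : Fin N, g t (v (t : Fin (T + 1)) j) := by
    refine Measurable.mul (Finset.measurable_prod _ fun j _ =>
      hp0.comp' ((measurable_pi_apply j).comp' (measurable_pi_apply 0))) ?_
    exact Finset.measurable_prod _ fun s _ => Finset.measurable_prod _ fun j _ =>
      (hg s).comp' ((measurable_pi_apply j).comp' (measurable_pi_apply _))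
  have hnn : ∀ v : Fin (T + 1) → Fin N → ℝ,
      0 ≤ (∑ j : Fin N, dpfS N L pobs ptrans g (fun t => v (t : Fin (T + 1))) T j) *
        ((∏ j : Fin N, p0 (v 0 j)) *
          ∏ t ∈ Finset.Icc 1 T, ∏ j : Fin N, g t (v (t : Fin (T + 1)) j)) :=
    fun v => mul_nonneg
      (Finset.sum_nonneg fun j _ => dpfS_nonneg hpobs0 hptrans0 hg0 _ T j)
      (mul_nonneg (Finset.prod_nonneg fun j _ => hp00 _)
        (Finset.prod_nonneg fun s _ => Finset.prod_nonneg fun j _ => hg0 _ _))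
  rw [MeasureTheory.integral_eq_lintegral_of_nonneg_ae (Filter.Eventually.of_forall hnn)
    (((Finset.measurable_sum _ fun j _ => hSmv j).mul hdensm).aestronglyMeasurable)]
  have hofL : ∀ v : Fin (T + 1) → Fin N → ℝ,
      ENNReal.ofReal
        ((∑ j : Fin N, dpfS N L pobs ptrans g (fun t => v (t : Fin (T + 1))) T j) *
          ((∏ j : Fin N, p0 (v 0 j)) *
            ∏ t ∈ Finset.Icc 1 T, ∏ j : Fin N, g t (v (t : Fin (T + 1)) j)))
      = (∑ j : Fin N, ENNReal.ofReal
            (dpfS N L pobs ptrans g (fun s => v (s : Fin (T + 1))) T j)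
              * (fun _ : ℝ => (1 : ENNReal)) (v (T : Fin (T + 1)) j))
          * (ENNReal.ofReal (∏ j : Fin N, p0 (v 0 j))
              * ∏ s ∈ Finset.Icc 1 T, ∏ j : Fin N,
                  ENNReal.ofReal (g s (v (s : Fin (T + 1)) j))) := by
    intro v
    rw [ENNReal.ofReal_mul (Finset.sum_nonneg fun j _ =>
        dpfS_nonneg hpobs0 hptrans0 hg0 _ T j),
      ENNReal.ofReal_sum_of_nonneg (fun j _ => dpfS_nonneg hpobs0 hptrans0 hg0 _ T j),
      ENNReal.ofReal_mul (Finset.prod_nonneg fun j _ => hp00 _),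
      ENNReal.ofReal_prod_of_nonneg (fun s _ =>
        Finset.prod_nonneg fun j _ => hg0 _ _)]
    congr 1
    · exact Finset.sum_congr rfl fun j _ => (mul_one _).symm
    · congr 1
      exact Finset.prod_congr rfl fun s _ =>
        ENNReal.ofReal_prod_of_nonneg (fun j _ => hg0 _ _)
  rw [lintegral_congr hofL,
    main_particle N L T hL1 p0 pobs ptrans g hp0 hp00 hp0dens hpobs hpobs0 hptrans hptrans0
      hg hgpos hgdens T le_rfl (fun _ => 1) measurable_const]
  -- RHS
  have hnn2 : ∀ x : Fin (T + 1) → ℝ,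
      0 ≤ p0 (x 0) * ∏ t ∈ Finset.Icc 1 T,
        pobs t (x (t : Fin (T + 1))) *
          ptrans t (x ((t - 1 : ℕ) : Fin (T + 1))) (x (t : Fin (T + 1))) :=
    fun x => mul_nonneg (hp00 _) (Finset.prod_nonneg fun s _ =>
      mul_nonneg (hpobs0 _ _) (hptrans0 _ _ _))
  have hmeas2 : Measurable fun x : Fin (T + 1) → ℝ =>
      p0 (x 0) * ∏ t ∈ Finset.Icc 1 T,
        pobs t (x (t : Fin (T + 1))) *
          ptrans t (x ((t - 1 : ℕ) : Fin (T + 1))) (x (t : Fin (T + 1))) := by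
    refine Measurable.mul (hp0.comp' (measurable_pi_apply 0)) ?_
    refine Finset.measurable_prod _ fun s _ => ?_
    have h1 : Measurable fun x : Fin (T + 1) → ℝ => pobs s (x (s : Fin (T + 1))) :=
      (hpobs s).comp' (measurable_pi_apply _)
    have h2 : Measurable fun x : Fin (T + 1) → ℝ =>
        ptrans s (x ((s - 1 : ℕ) : Fin (T + 1))) (x (s : Fin (T + 1))) :=
      (hptrans s).comp' (show Measurable fun x : Fin (T + 1) → ℝ => (x ((s - 1 : ℕ) : Fin (T + 1)), x (s : Fin (T + 1))) from (measurable_pi_apply _).prodMk (measurable_pi_apply _))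
    exact h1.mul h2
  rw [MeasureTheory.integral_eq_lintegral_of_nonneg_ae (Filter.Eventually.of_forall hnn2)
    hmeas2.aestronglyMeasurable]
  have hmc := main_chain T p0 pobs ptrans g hp0 hpobs hptrans hg hg0 hgdens T le_rfl
    (fun _ => 1) measurable_const
  rw [← hmc]
  congr 1
  refine lintegral_congr fun x => ?_
  rw [show Finset.Icc (T + 1) T = (∅ : Finset ℕ) from Finset.Icc_eq_empty (by omega),
    Finset.prod_empty, mul_one, mul_one,
    ENNReal.ofReal_mul (hp00 _),
    ENNReal.ofReal_prod_of_nonneg (fun s _ => mul_nonneg (hpobs0 _ _) (hptrans0 _ _ _))]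
  congr 1
  exact Finset.prod_congr rfl fun s _ => (ENNReal.ofReal_mul (hpobs0 _ _)).symm
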